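/- Let $c>0$, $h(c)=\frac{\pi}{2cE(1-1/c^2)}$ where $E(m)=\int_0^{\pi/2}\sqrt{1-m\sin^2\theta}\,d\theta$, and define $f(\xi)=\cos^2\left(\frac{\pi}{4}-\frac{c}{2}h(c)E\left(\arcsin(\xi/c)\mid 1-\frac{1}{c^2}\right)\right)$ for $\xi\in[-c,c]$. Then $f$ satisfies the ODE $f'(\xi)\sqrt{\frac{c^4-\xi^2c^2}{\xi^2+c^4-\xi^2c^2}}=h(c)\sqrt{f(\xi)(1-f(\xi))}$ for all $\xi\in(-c,c)$. -/

import Mathlib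

/-- Incomplete elliptic integral of the second kind. -/
noncomputable def ellipticE (φ m : ℝ) : ℝ := ∫ θ in (0:ℝ)..φ, Real.sqrt (1 - m * Real.sin θ ^ 2)

/-- Complete elliptic integral of the second kind. -/
noncomputable def ellipticEc (m : ℝ) : ℝ := ellipticE (Real.pi / 2) m

theorem stmt_6 (c : ℝ) (hc : 0 < c)
    (h : ℝ) (hh : h = Real.pi / (2 * c * ellipticEc (1 - 1 / c ^ 2)))
    (f : ℝ → ℝ)
    (hf : ∀ ξ, f ξ =
      Real.cos (Real.pi / 4 - (c / 2) * h * ellipticE (Real.arcsin (ξ / c)) (1 - 1 / c ^ 2)) ^ 2) :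
    ∀ ξ ∈ Set.Ioo (-c) c,
      deriv f ξ * Real.sqrt ((c ^ 4 - ξ ^ 2 * c ^ 2) / (ξ ^ 2 + c ^ 4 - ξ ^ 2 * c ^ 2))
        = h * Real.sqrt (f ξ * (1 - f ξ)) := by
  have hc0 : c ≠ 0 := hc.ne'
  set m := 1 - 1/c^2 with hm
  have hgpos : ∀ θ : ℝ, 0 < 1 - m * Real.sin θ ^ 2 := by
    intro θ
    rw [hm]
    have key : 0 < c^2 - c^2*Real.sin θ^2 + Real.sin θ^2 := by
      nlinarith [Real.sin_sq_le_one θ, sq_nonneg (Real.sin θ),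
        mul_nonneg (sq_nonneg c) (sub_nonneg.mpr (Real.sin_sq_le_one θ))]
    have e : 1 - (1 - 1/c^2) * Real.sin θ^2 = (c^2 - c^2*Real.sin θ^2 + Real.sin θ^2)/c^2 := by
      field_simp; ring
    rw [e]; positivity
  have hgcont : Continuous (fun θ : ℝ => Real.sqrt (1 - m * Real.sin θ ^ 2)) := by continuity
  have hEc : 0 < ellipticEc m := by
    unfold ellipticEc ellipticE
    exact intervalIntegral.intervalIntegral_pos_of_pos (hgcont.intervalIntegrable _ _)
      (fun x => Real.sqrt_pos.mpr (hgpos x)) (by positivity)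
  -- oddness
  have hodd : ∀ a : ℝ, ellipticE (-a) m = - ellipticE a m := by
    intro a
    unfold ellipticE
    have h1 : (∫ θ in (-a:ℝ)..0, Real.sqrt (1 - m * Real.sin θ ^ 2))
        = ∫ θ in (0:ℝ)..a, Real.sqrt (1 - m * Real.sin θ ^ 2) := by
      have := intervalIntegral.integral_comp_neg (a := -a) (b := 0)
        (f := fun θ => Real.sqrt (1 - m * Real.sin θ ^ 2))
      simp only [Real.sin_neg, neg_sq, neg_zero, neg_neg] at this
      exact this
    rw [intervalIntegral.integral_symm, h1]
  -- bound
  have hEbound : ∀ φ : ℝ, φ ∈ Set.Icc (-(Real.pi/2)) (Real.pi/2) →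
      |ellipticE φ m| ≤ ellipticEc m := by
    have hnonneg : ∀ a b : ℝ, a ≤ b → 0 ≤ ∫ θ in a..b, Real.sqrt (1 - m * Real.sin θ ^ 2) :=
      fun a b hab => intervalIntegral.integral_nonneg hab (fun x _ => Real.sqrt_nonneg _)
    have hcase : ∀ φ : ℝ, 0 ≤ φ → φ ≤ Real.pi/2 → |ellipticE φ m| ≤ ellipticEc m := by
      intro φ h0 h1
      unfold ellipticEc ellipticE
      rw [abs_of_nonneg (hnonneg 0 φ h0)]
      exact intervalIntegral.integral_mono_interval le_rfl h0 h1
        (Filter.Eventually.of_forall (fun x => Real.sqrt_nonneg _))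
        (hgcont.intervalIntegrable _ _)
    intro φ hφ
    rcases le_or_gt 0 φ with h0 | h0
    · exact hcase φ h0 hφ.2
    · have he : φ = -(-φ) := by ring
      rw [he, hodd, abs_neg]
      exact hcase (-φ) (by linarith) (by linarith [hφ.1])
  -- derivative of ellipticE
  have hE' : ∀ t : ℝ, HasDerivAt (fun u => ellipticE u m) (Real.sqrt (1 - m * Real.sin t ^ 2)) t := by
    intro t
    unfold ellipticE
    exact intervalIntegral.integral_hasDerivAt_right (hgcont.intervalIntegrable _ _)
      (hgcont.aestronglyMeasurable.stronglyMeasurableAtFilter) hgcont.continuousAt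
  rintro ξ ⟨hξ1, hξ2⟩
  have hP1 : 0 < c^2 - ξ^2 := by nlinarith
  have hP2 : 0 < ξ^2 + c^4 - ξ^2*c^2 := by nlinarith [sq_nonneg ξ, sq_nonneg (ξ*c)]
  have hP3 : 0 < c^4 - ξ^2*c^2 := by nlinarith
  have hs1 : -(1:ℝ) < ξ/c := by rw [lt_div_iff₀ hc]; linarith
  have hs2 : ξ/c < 1 := by rw [div_lt_one hc]; linarith
  have hs2' : 0 < 1 - (ξ/c)^2 := by nlinarith
  have hsin : Real.sin (Real.arcsin (ξ/c)) = ξ/c := Real.sin_arcsin (by linarith) (by linarith)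
  have hms : 0 < 1 - m * (ξ/c)^2 := by
    have := hgpos (Real.arcsin (ξ/c)); rwa [hsin] at this
  -- sqrt atoms
  set sa := Real.sqrt (1 - m * (ξ/c)^2) with hsa
  set sb := Real.sqrt (1 - (ξ/c)^2) with hsb
  set sd := Real.sqrt ((c ^ 4 - ξ ^ 2 * c ^ 2) / (ξ ^ 2 + c ^ 4 - ξ ^ 2 * c ^ 2)) with hsd
  have ea : sa ^ 2 = 1 - m * (ξ/c)^2 := Real.sq_sqrt hms.le
  have eb : sb ^ 2 = 1 - (ξ/c)^2 := Real.sq_sqrt hs2'.le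
  have ed : sd ^ 2 = (c ^ 4 - ξ ^ 2 * c ^ 2) / (ξ ^ 2 + c ^ 4 - ξ ^ 2 * c ^ 2) :=
    Real.sq_sqrt (by positivity)
  have hsa0 : 0 ≤ sa := Real.sqrt_nonneg _
  have hsb0 : 0 < sb := Real.sqrt_pos.mpr hs2'
  have hsd0 : 0 ≤ sd := Real.sqrt_nonneg _
  -- chain rule
  have hdiv : HasDerivAt (fun t : ℝ => t/c) (1/c) ξ := by
    simpa using (hasDerivAt_id ξ).div_const c
  have harcsin : HasDerivAt Real.arcsin (1 / sb) (ξ/c) :=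
    Real.hasDerivAt_arcsin hs1.ne' hs2.ne
  have hcomp1 : HasDerivAt (fun t => Real.arcsin (t/c)) (1 / sb * (1/c)) ξ := by
    have := harcsin.comp ξ hdiv; exact this
  have hcomp2 : HasDerivAt (fun t => ellipticE (Real.arcsin (t/c)) m)
      (sa * (1 / sb * (1/c))) ξ := by
    have := (hE' (Real.arcsin (ξ/c))).comp ξ hcomp1
    rwa [hsin] at this
  have hfe : f = fun t =>
      Real.cos (Real.pi / 4 - (c / 2) * h * ellipticE (Real.arcsin (t/c)) m) ^ 2 := funext hf
  have hfd0 := (((hasDerivAt_const ξ (Real.pi/4)).sub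
      (hcomp2.const_mul ((c/2)*h))).cos).pow 2
  have hderiv : deriv f ξ =
      Real.cos (Real.pi / 4 - (c / 2) * h * ellipticE (Real.arcsin (ξ/c)) m)
        * Real.sin (Real.pi / 4 - (c / 2) * h * ellipticE (Real.arcsin (ξ/c)) m)
        * (h * (c * (sa * (1 / sb * (1/c))))) := by
    rw [hfe]
    erw [hfd0.deriv]
    simp only [Pi.sub_apply]
    push_cast
    ring
  -- key sqrt identity
  have key : c * (sa * (1 / sb * (1/c))) * sd = 1 := by
    have hX : 0 ≤ c * (sa * (1 / sb * (1/c))) * sd := by positivity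
    have hX2 : (c * (sa * (1 / sb * (1/c))) * sd) ^ 2 = 1 := by
      have e : (c * (sa * (1 / sb * (1/c))) * sd) ^ 2 = sa^2 * sd^2 / sb^2 := by
        field_simp
      rw [e, ea, eb, ed, hm]
      have hne : ξ ^ 2 + c ^ 4 - ξ ^ 2 * c ^ 2 ≠ 0 := hP2.ne'
      rw [div_eq_one_iff_eq hs2'.ne', mul_div_assoc', div_eq_iff hne]
      field_simp
      ring
    have hz : (c * (sa * (1 / sb * (1/c))) * sd - 1) * (c * (sa * (1 / sb * (1/c))) * sd + 1) = 0 := by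
      linear_combination hX2
    rcases mul_eq_zero.mp hz with h' | h'
    · linarith
    · linarith
  -- bounds on A
  set A := Real.pi / 4 - (c / 2) * h * ellipticE (Real.arcsin (ξ/c)) m with hA
  have hEb := hEbound (Real.arcsin (ξ/c))
    ⟨Real.neg_pi_div_two_le_arcsin _, Real.arcsin_le_pi_div_two _⟩
  rw [abs_le] at hEb
  have hch : (c/2) * h * ellipticE (Real.arcsin (ξ/c)) m
      = Real.pi * ellipticE (Real.arcsin (ξ/c)) m / (4 * ellipticEc m) := by
    rw [hh]; field_simp; ring
  have hb1 : Real.pi * ellipticE (Real.arcsin (ξ/c)) m / (4 * ellipticEc m) ≤ Real.pi / 4 := by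
    have h'' : Real.pi / 4 = Real.pi * ellipticEc m / (4 * ellipticEc m) := by
      field_simp
    rw [h'']
    gcongr
    exact hEb.2
  have hb2 : -(Real.pi/4) ≤ Real.pi * ellipticE (Real.arcsin (ξ/c)) m / (4 * ellipticEc m) := by
    have h'' : -(Real.pi / 4) = Real.pi * (-(ellipticEc m)) / (4 * ellipticEc m) := by
      field_simp
    rw [h'']
    gcongr
    exact hEb.1
  have hA1 : 0 ≤ A := by rw [hA, hch]; linarith
  have hA2 : A ≤ Real.pi / 2 := by rw [hA, hch]; linarith
  have hcosA : 0 ≤ Real.cos A := Real.cos_nonneg_of_mem_Icc ⟨by linarith [Real.pi_pos], hA2⟩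
  have hsinA : 0 ≤ Real.sin A := Real.sin_nonneg_of_nonneg_of_le_pi hA1 (hA2.trans (by linarith [Real.pi_pos]))
  have hfval : f ξ * (1 - f ξ) = (Real.cos A * Real.sin A) ^ 2 := by
    rw [hf ξ]
    linear_combination (-(Real.cos A ^ 2)) * Real.sin_sq_add_cos_sq A
  rw [hfval, Real.sqrt_sq (mul_nonneg hcosA hsinA), hderiv]
  linear_combination (Real.cos A * Real.sin A * h) * key
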